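/- Let R be a commutative ring and r_1, …, r_s ∈ R elements generating the unit ideal, i.e., (r_1, …, r_s)R = R. Let (M_m)_{m∈ℕ} be a tower of R-modules with transition maps M_{m+1} → M_m. For each i, consider the tower of localized modules (M_m[1/r_i])_m, where M_m[1/r_i] is the localization of M_m at the multiplicative set of powers of r_i, with the induced transition maps. Then (M_m)_m is pro-zero if and only if for every i ∈ {1, …, s} the tower (M_m[1/r_i])_m is pro-zero. -/

import Mathlib

variable {R : Type*} [CommRing R]

/-- The composite transition map `P b → P a` (for `a ≤ b`) of a tower of `R`-modules
`⋯ → P (m+1) → P m → ⋯ → P 0`. -/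
noncomputable def towerMap {P : ℕ → Type*} [∀ m, AddCommGroup (P m)] [∀ m, Module R (P m)]
    (p : ∀ m, P (m + 1) →ₗ[R] P m) : ∀ {a b : ℕ}, a ≤ b → (P b →ₗ[R] P a) :=
  fun {a _} h =>
    Nat.leRecOn h (fun {k} (g : P k →ₗ[R] P a) => g.comp (p k)) LinearMap.id

/-- A tower of `R`-modules is *pro-zero* (satisfies the trivial Mittag-Leffler condition,
i.e. is isomorphic to `0` in the pro-category) if for every `m` some composite
transition map `P (m+k) → P m` is zero. -/
def IsProZeroTower {P : ℕ → Type*} [∀ m, AddCommGroup (P m)] [∀ m, Module R (P m)]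
    (p : ∀ m, P (m + 1) →ₗ[R] P m) : Prop :=
  ∀ m : ℕ, ∃ k : ℕ, towerMap p (Nat.le_add_right m k) = 0

lemma towerMap_self {P : ℕ → Type*} [∀ m, AddCommGroup (P m)] [∀ m, Module R (P m)]
    (p : ∀ m, P (m + 1) →ₗ[R] P m) {a : ℕ} (h : a ≤ a) :
    towerMap p h = LinearMap.id :=
  Nat.leRecOn_self _

lemma towerMap_succ {P : ℕ → Type*} [∀ m, AddCommGroup (P m)] [∀ m, Module R (P m)]
    (p : ∀ m, P (m + 1) →ₗ[R] P m) {a b : ℕ} (h1 : a ≤ b) (h2 : a ≤ b + 1) :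
    towerMap p h2 = (towerMap p h1).comp (p b) :=
  Nat.leRecOn_succ h1 _

lemma towerMap_comp {P : ℕ → Type*} [∀ m, AddCommGroup (P m)] [∀ m, Module R (P m)]
    (p : ∀ m, P (m + 1) →ₗ[R] P m) {a b c : ℕ} (h1 : a ≤ b) (h2 : b ≤ c) :
    towerMap p (h1.trans h2) = (towerMap p h1).comp (towerMap p h2) := by
  induction c, h2 using Nat.le_induction with
  | base => rw [towerMap_self p (le_refl b), LinearMap.comp_id]
  | succ c h ih =>
      rw [towerMap_succ p (h1.trans h) (h1.trans (h.trans c.le_succ)),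
        towerMap_succ p h (h.trans c.le_succ), ih, LinearMap.comp_assoc]

/-- If a tower `p` on the localized modules agrees pointwise with the localization of the
tower `t`, then its composite transition maps are the localizations of those of `t`. -/
lemma towerMap_apply_localized (S : Submonoid R) {M : ℕ → Type*}
    [∀ m, AddCommGroup (M m)] [∀ m, Module R (M m)]
    (t : ∀ m, M (m + 1) →ₗ[R] M m)
    (p : ∀ m, LocalizedModule S (M (m + 1)) →ₗ[Localization S] LocalizedModule S (M m))
    (hp : ∀ m x, p m x = LocalizedModule.map S (t m) x)
    {a b : ℕ} (h : a ≤ b) (x : LocalizedModule S (M b)) :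
    towerMap (P := fun m => LocalizedModule S (M m)) p h x
      = LocalizedModule.map S (towerMap t h) x := by
  induction b, h using Nat.le_induction with
  | base =>
      rw [towerMap_self, towerMap_self]
      simp
  | succ b h ih =>
      rw [towerMap_succ (P := fun m => LocalizedModule S (M m)) p h (h.trans b.le_succ),
        towerMap_succ t h (h.trans b.le_succ),
        LinearMap.comp_apply, hp, ih]
      induction x using LocalizedModule.induction_on with
      | h y u => simp [LocalizedModule.map_mk]

lemma isProZeroTower_localized (S : Submonoid R) {M : ℕ → Type*}
    [∀ m, AddCommGroup (M m)] [∀ m, Module R (M m)]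
    (t : ∀ m, M (m + 1) →ₗ[R] M m)
    (p : ∀ m, LocalizedModule S (M (m + 1)) →ₗ[Localization S] LocalizedModule S (M m))
    (hp : ∀ m x, p m x = LocalizedModule.map S (t m) x)
    (H : IsProZeroTower t) :
    IsProZeroTower (P := fun m => LocalizedModule S (M m)) p := by
  intro m
  obtain ⟨k, hk⟩ := H m
  refine ⟨k, LinearMap.ext fun x => ?_⟩
  rw [towerMap_apply_localized S t p hp, hk]
  induction x using LocalizedModule.induction_on with
  | h y u => simp [LocalizedModule.map_mk]

lemma isProZeroTower_of_localizations
    {s : ℕ} (r : Fin s → R) (hr : Ideal.span (Set.range r) = ⊤)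
    {M : ℕ → Type*} [∀ m, AddCommGroup (M m)] [∀ m, Module R (M m)]
    (t : ∀ m, M (m + 1) →ₗ[R] M m)
    (p : ∀ i : Fin s, ∀ m, LocalizedModule (Submonoid.powers (r i)) (M (m + 1))
      →ₗ[Localization (Submonoid.powers (r i))] LocalizedModule (Submonoid.powers (r i)) (M m))
    (hp : ∀ i m x, p i m x = LocalizedModule.map (Submonoid.powers (r i)) (t m) x)
    (H : ∀ i, IsProZeroTower (P := fun m => LocalizedModule (Submonoid.powers (r i)) (M m)) (p i)) :
    IsProZeroTower t := by
  intro m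
  choose k hk using fun i => H i m
  set K : ℕ := Finset.univ.sup k with hK
  refine ⟨K, LinearMap.ext fun x => ?_⟩
  rw [LinearMap.zero_apply]
  set y : M m := towerMap t (Nat.le_add_right m K) x with hy
  have key : ∀ i : Fin s, ∃ n : ℕ, (r i) ^ n • y = 0 := by
    intro i
    have h2 : m + k i ≤ m + K := by
      have : k i ≤ K := Finset.le_sup (Finset.mem_univ i)
      omega
    have e : y = towerMap t (Nat.le_add_right m (k i)) (towerMap t h2 x) :=
      LinearMap.congr_fun (towerMap_comp t (Nat.le_add_right m (k i)) h2) x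
    have e2 : LocalizedModule.mk (S := Submonoid.powers (r i)) y 1 = 0 := by
      rw [e, ← LocalizedModule.map_mk,
        ← towerMap_apply_localized (Submonoid.powers (r i)) t (p i) (hp i), hk i,
        LinearMap.zero_apply]
    rw [show (0 : LocalizedModule (Submonoid.powers (r i)) (M m))
        = LocalizedModule.mk 0 1 from (LocalizedModule.zero_mk 1).symm,
      LocalizedModule.mk_eq] at e2
    obtain ⟨⟨u, n, rfl⟩, hu⟩ := e2
    exact ⟨n, by simpa [Submonoid.smul_def] using hu⟩
  have htop : Ideal.torsionOf R (M m) y = ⊤ := by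
    rw [← Ideal.radical_eq_top, eq_top_iff, ← hr, Ideal.span_le]
    rintro _ ⟨i, rfl⟩
    obtain ⟨n, hn⟩ := key i
    exact ⟨n, (Ideal.mem_torsionOf_iff _ _).mpr hn⟩
  exact (Ideal.torsionOf_eq_top_iff R y).mp htop

/-- **Pro-vanishing is local.**  If `r 1, …, r s` generate the unit ideal of `R`, then a
tower `(M m)` of `R`-modules is pro-zero if and only if each localized tower
`(M m [1/r i])` is pro-zero. -/
theorem isProZeroTower_iff_localizations
    {s : ℕ} (r : Fin s → R) (hr : Ideal.span (Set.range r) = ⊤)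
    (M : ℕ → Type*) [∀ m, AddCommGroup (M m)] [∀ m, Module R (M m)]
    (t : ∀ m, M (m + 1) →ₗ[R] M m) :
    IsProZeroTower t ↔
      ∀ i : Fin s,
        IsProZeroTower (P := fun m => LocalizedModule (Submonoid.powers (r i)) (M m))
          (fun m => LocalizedModule.map (Submonoid.powers (r i)) (t m)) := by
  constructor
  · intro H i
    exact isProZeroTower_localized (Submonoid.powers (r i)) t
      (fun m => LocalizedModule.map (Submonoid.powers (r i)) (t m)) (fun _ _ => rfl) H
  · intro H
    exact isProZeroTower_of_localizations r hr t
      (fun i m => LocalizedModule.map (Submonoid.powers (r i)) (t m)) (fun _ _ _ => rfl) H
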